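/- For all complex numbers a, b, real q ≥ 4, and t ∈ [0,1], the bound | |a+t(b−a)|^{q−4}·conj((a+t(b−a))²) − |a|^{q−4}·conj(a²) | ≤ (q−2)·2^{q−4}·(|a|^{q−3} + |b−a|^{q−3})·|b−a| holds. -/

import Mathlib

open Complex
open scoped NNReal

private lemma two_rpow_aux {x y r : ℝ} (hx : 0 ≤ x) (hy : 0 ≤ y) (hr : 1 ≤ r) :
    (x + y) ^ r ≤ 2 ^ (r - 1) * (x ^ r + y ^ r) := by
  have key := NNReal.coe_le_coe.2
    (NNReal.rpow_add_le_mul_rpow_add_rpow (⟨x, hx⟩ : ℝ≥0) (⟨y, hy⟩ : ℝ≥0) hr)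
  push_cast at key
  convert key using 3 <;> rfl

private lemma young_aux {x y p : ℝ} (hp : 0 ≤ p) (hx : 0 ≤ x) (hy : 0 ≤ y) (hxy : y ≤ x) :
    (x ^ p - y ^ p) * y ≤ p * x ^ p * (x - y) := by
  rcases eq_or_lt_of_le hy with hy0 | hy0
  · rw [← hy0]; simp; positivity
  have hx0 : 0 < x := lt_of_lt_of_le hy0 hxy
  have hp1 : (0:ℝ) < p + 1 := by linarith
  have key : x ^ p * y ≤ p / (p + 1) * x ^ (p + 1) + 1 / (p + 1) * y ^ (p + 1) := by
    have h := Real.geom_mean_le_arith_mean2_weighted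
      (by positivity : (0:ℝ) ≤ p / (p + 1)) (by positivity : (0:ℝ) ≤ 1 / (p + 1))
      (by positivity : (0:ℝ) ≤ x ^ (p+1)) (by positivity : (0:ℝ) ≤ y ^ (p+1))
      (by field_simp)
    have e1 : (x ^ (p+1)) ^ (p / (p+1)) = x ^ p := by
      rw [← Real.rpow_mul hx, mul_div_cancel₀ _ hp1.ne']
    have e2 : (y ^ (p+1)) ^ ((1:ℝ) / (p+1)) = y := by
      rw [← Real.rpow_mul hy, mul_one_div, div_self hp1.ne', Real.rpow_one]
    rwa [e1, e2] at h
  have hxp1 : x ^ (p+1) = x ^ p * x := by rw [Real.rpow_add_one hx0.ne']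
  have hyp1 : y ^ (p+1) = y ^ p * y := by rw [Real.rpow_add_one hy0.ne']
  rw [hxp1, hyp1] at key
  have key2 := mul_le_mul_of_nonneg_left key hp1.le
  have e3 : (p + 1) * (p / (p + 1) * (x ^ p * x) + 1 / (p + 1) * (y ^ p * y))
      = p * (x ^ p * x) + y ^ p * y := by field_simp
  rw [e3] at key2
  nlinarith [key2]

private lemma lemA_half {u v : ℂ} {p M : ℝ} (hp : 0 ≤ p) (hu : ‖u‖ ≤ M)
    (hvu : ‖v‖ ≤ ‖u‖) :
    ‖(((‖u‖ ^ p : ℝ) : ℂ) * u - ((‖v‖ ^ p : ℝ) : ℂ) * v)‖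
      ≤ (p + 1) * M ^ p * ‖(u - v)‖ := by
  set x := ‖u‖ with hx
  set y := ‖v‖ with hy
  have hx0 : 0 ≤ x := norm_nonneg u
  have hy0 : 0 ≤ y := norm_nonneg v
  have hM0 : 0 ≤ M := le_trans hx0 hu
  have hxM : x ^ p ≤ M ^ p := Real.rpow_le_rpow hx0 hu hp
  have hsplit : ((x ^ p : ℝ) : ℂ) * u - ((y ^ p : ℝ) : ℂ) * v
      = ((x ^ p : ℝ) : ℂ) * (u - v) + (((x ^ p - y ^ p : ℝ)) : ℂ) * v := by
    push_cast; ring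
  rw [hsplit]
  calc ‖(((x ^ p : ℝ) : ℂ) * (u - v) + (((x ^ p - y ^ p : ℝ)) : ℂ) * v)‖
      ≤ ‖(((x ^ p : ℝ) : ℂ) * (u - v))‖ + ‖((((x ^ p - y ^ p : ℝ)) : ℂ) * v)‖ :=
        norm_add_le _ _
    _ = x ^ p * ‖(u - v)‖ + |x ^ p - y ^ p| * y := by
        rw [norm_mul, norm_mul, Complex.norm_real, Real.norm_eq_abs, Complex.norm_real, Real.norm_eq_abs,
          _root_.abs_of_nonneg (Real.rpow_nonneg hx0 p)]
    _ ≤ M ^ p * ‖(u - v)‖ + p * x ^ p * (x - y) := by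
        have h1 : |x ^ p - y ^ p| = x ^ p - y ^ p := by
          rw [_root_.abs_of_nonneg]
          exact sub_nonneg.2 (Real.rpow_le_rpow hy0 hvu hp)
        have h2 : (x ^ p - y ^ p) * y ≤ p * x ^ p * (x - y) := young_aux hp hx0 hy0 hvu
        rw [h1]
        have := mul_le_mul_of_nonneg_right hxM (norm_nonneg (u - v))
        linarith
    _ ≤ M ^ p * ‖(u - v)‖ + p * M ^ p * ‖(u - v)‖ := by
        have hxy : x - y ≤ ‖(u - v)‖ := by
          exact norm_sub_norm_le u v
        have hxy0 : 0 ≤ x - y := sub_nonneg.2 hvu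
        have : p * x ^ p * (x - y) ≤ p * M ^ p * ‖(u - v)‖ := by
          apply mul_le_mul (mul_le_mul_of_nonneg_left hxM hp) hxy hxy0 (by positivity)
        linarith
    _ = (p + 1) * M ^ p * ‖(u - v)‖ := by ring

private lemma lemA {u v : ℂ} {p M : ℝ} (hp : 0 ≤ p) (hu : ‖u‖ ≤ M)
    (hv : ‖v‖ ≤ M) :
    ‖(((‖u‖ ^ p : ℝ) : ℂ) * u - ((‖v‖ ^ p : ℝ) : ℂ) * v)‖
      ≤ (p + 1) * M ^ p * ‖(u - v)‖ := by
  rcases le_total (‖v‖) (‖u‖) with h | h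
  · exact lemA_half hp hu h
  · rw [← norm_neg, neg_sub, ← norm_neg (u - v), neg_sub]
    exact lemA_half hp hv h

private lemma key_lem {w z : ℂ} {p M : ℝ} (hp : 0 ≤ p) (hw : ‖w‖ ≤ M)
    (hz : ‖z‖ ≤ M) :
    ‖(((‖w‖ ^ p : ℝ) : ℂ) * (starRingEnd ℂ) (w ^ 2)
        - ((‖z‖ ^ p : ℝ) : ℂ) * (starRingEnd ℂ) (z ^ 2))‖
      ≤ (p + 2) * M ^ (p + 1) * ‖(w - z)‖ := by
  set U := (starRingEnd ℂ) w with hU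
  set V := (starRingEnd ℂ) z with hV
  have haU : ‖U‖ = ‖w‖ := Complex.norm_conj w
  have haV : ‖V‖ = ‖z‖ := Complex.norm_conj z
  have hM0 : 0 ≤ M := le_trans (norm_nonneg w) hw
  have hsplit : ((‖w‖ ^ p : ℝ) : ℂ) * (starRingEnd ℂ) (w ^ 2)
      - ((‖z‖ ^ p : ℝ) : ℂ) * (starRingEnd ℂ) (z ^ 2)
      = ((‖w‖ ^ p : ℝ) : ℂ) * U * (U - V)
        + (((‖w‖ ^ p : ℝ) : ℂ) * U - ((‖z‖ ^ p : ℝ) : ℂ) * V) * V := by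
    simp only [map_pow, hU, hV]; ring
  rw [hsplit]
  have hUV : ‖(U - V)‖ = ‖(w - z)‖ := by
    rw [hU, hV, ← map_sub, Complex.norm_conj]
  calc ‖_‖
      ≤ ‖(((‖w‖ ^ p : ℝ) : ℂ) * U * (U - V))‖
        + ‖((((‖w‖ ^ p : ℝ) : ℂ) * U
            - ((‖z‖ ^ p : ℝ) : ℂ) * V) * V)‖ := norm_add_le _ _
    _ ≤ M ^ p * M * ‖(w - z)‖ + ((p + 1) * M ^ p * ‖(w - z)‖) * M := by
        gcongr ?_ + ?_
        · rw [norm_mul, norm_mul, Complex.norm_real, Real.norm_eq_abs, hUV,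
            _root_.abs_of_nonneg (Real.rpow_nonneg (norm_nonneg w) p)]
          apply mul_le_mul_of_nonneg_right _ (norm_nonneg (w - z))
          exact mul_le_mul (Real.rpow_le_rpow (norm_nonneg w) hw hp) (haU ▸ hw)
            (norm_nonneg _) (Real.rpow_nonneg hM0 p)
        · rw [norm_mul]
          have h1 : ‖(((‖w‖ ^ p : ℝ) : ℂ) * U
              - ((‖z‖ ^ p : ℝ) : ℂ) * V)‖ ≤ (p + 1) * M ^ p * ‖(w - z)‖ := by
            rw [← haU, ← haV, ← hUV]
            exact lemA hp (haU ▸ hw) (haV ▸ hz)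
          have h2 : ‖V‖ ≤ M := haV ▸ hz
          exact mul_le_mul h1 h2 (norm_nonneg V) (by positivity)
    _ = (p + 2) * (M ^ p * M) * ‖(w - z)‖ := by ring
    _ = (p + 2) * M ^ (p + 1) * ‖(w - z)‖ := by
        rcases eq_or_lt_of_le hM0 with h0 | h0
        · rcases eq_or_lt_of_le hp with hp0 | hp0
          · simp [← h0, ← hp0]
          · rw [← h0]
            rw [Real.zero_rpow hp0.ne', Real.zero_rpow (by linarith : p + 1 ≠ 0)]
            ring
        · rw [Real.rpow_add_one h0.ne']

theorem stmt9 (a b : ℂ) (q : ℝ) (hq : 4 ≤ q) (t : ℝ) (ht0 : 0 ≤ t) (ht1 : t ≤ 1) :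
    ‖(((‖(a + (t : ℂ) * (b - a))‖ ^ (q - 4) : ℝ) : ℂ)
            * (starRingEnd ℂ) ((a + (t : ℂ) * (b - a)) ^ 2)
          - ((‖a‖ ^ (q - 4) : ℝ) : ℂ) * (starRingEnd ℂ) (a ^ 2))‖
      ≤ (q - 2) * 2 ^ (q - 4) * (‖a‖ ^ (q - 3) + ‖(b - a)‖ ^ (q - 3))
          * ‖(b - a)‖ := by
  set w := a + (t : ℂ) * (b - a) with hwdef
  set M := ‖a‖ + ‖(b - a)‖ with hMdef
  have hd0 : 0 ≤ ‖(b - a)‖ := norm_nonneg _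
  have ha0 : 0 ≤ ‖a‖ := norm_nonneg _
  have hwM : ‖w‖ ≤ M := by
    calc ‖w‖ ≤ ‖a‖ + ‖((t:ℂ) * (b - a))‖ := norm_add_le _ _
      _ = ‖a‖ + t * ‖(b - a)‖ := by
          rw [norm_mul, Complex.norm_real, Real.norm_eq_abs, _root_.abs_of_nonneg ht0]
      _ ≤ M := by nlinarith
  have haM : ‖a‖ ≤ M := by simp [hMdef, hd0]
  have hp : (0:ℝ) ≤ q - 4 := by linarith
  have h1 := key_lem (w := w) (z := a) (M := M) hp hwM haM
  have hwz : ‖(w - a)‖ = t * ‖(b - a)‖ := by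
    rw [hwdef]
    have e : a + (t : ℂ) * (b - a) - a = (t:ℂ) * (b - a) := by ring
    rw [e, norm_mul, Complex.norm_real, Real.norm_eq_abs, _root_.abs_of_nonneg ht0]
  have hq2 : (0:ℝ) ≤ q - 2 := by linarith
  have hstep : ‖(w - a)‖ ≤ ‖(b - a)‖ := by
    rw [hwz]; nlinarith
  have hMr : M ^ (q - 4 + 1)
      ≤ 2 ^ (q - 4) * (‖a‖ ^ (q - 3) + ‖(b - a)‖ ^ (q - 3)) := by
    have h43 : q - 4 + 1 = q - 3 := by ring
    rw [h43]
    have hle : (1:ℝ) ≤ q - 3 := by linarith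
    have h44 : q - 3 - 1 = q - 4 := by ring
    have := two_rpow_aux ha0 hd0 hle
    rwa [h44] at this
  calc ‖_‖ ≤ (q - 4 + 2) * M ^ (q - 4 + 1) * ‖(w - a)‖ := h1
    _ ≤ (q - 2) * (2 ^ (q - 4) * (‖a‖ ^ (q - 3) + ‖(b - a)‖ ^ (q - 3)))
          * ‖(b - a)‖ := by
        have hco : q - 4 + 2 = q - 2 := by ring
        rw [hco]
        apply mul_le_mul
        · exact mul_le_mul_of_nonneg_left hMr hq2
        · exact hstep
        · exact norm_nonneg _
        · positivity
    _ = (q - 2) * 2 ^ (q - 4) * (‖a‖ ^ (q - 3) + ‖(b - a)‖ ^ (q - 3))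
          * ‖(b - a)‖ := by ring
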